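/- Equivalence of state-feedback SLP and IOP parameters (Section IV-F): Let K := RatFunc ℝ with z := RatFunc.X, let A : n×n and B : n×m be real matrices over K, and let K, Φx, Sxu, Φu, Suu be matrices over K with (Matrix.fromBlocks (z•1 − A) (−B) (−K) 1) * (Matrix.fromBlocks Φx Sxu Φu Suu) = 1. If z•1 − A is invertible and G := (z•1 − A)⁻¹ * B, then (Matrix.fromBlocks 1 (−G) (−K) 1) * (Matrix.fromBlocks (Φx * (z•1 − A)) Sxu (Φu * (z•1 − A)) Suu) = 1; that is, the same controller K has IOP parameters (Y, W, U, Z) = (Φx(z•1 − A), Sxu, Φu(z•1 − A), Suu). -/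

import Mathlib

open Matrix

noncomputable section

set_option synthInstance.maxHeartbeats 1000000
set_option maxHeartbeats 1000000

/-- A real constant matrix regarded as a matrix of rational transfer functions. -/
def mR {n m : Type*} (M : Matrix n m ℝ) : Matrix n m (RatFunc ℝ) :=
  M.map (algebraMap ℝ (RatFunc ℝ))

/-- The transfer-function variable `z`. -/
def zz : RatFunc ℝ := RatFunc.X

/-- **Equivalence of state-feedback SLP and IOP parameters** (Section IV-F).
If `[[z•1 - A, -B],[-K, 1]] * [[Φx, Sxu],[Φu, Suu]] = 1` and `z•1 - A` is invertible
with `G := (z•1 - A)⁻¹ * B`, then the same controller `K` has IOP parameters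
`(Y, W, U, Z) = (Φx (z•1 - A), Sxu, Φu (z•1 - A), Suu)`. -/
theorem slp_iop_equivalence {n m : Type*} [Fintype n] [Fintype m]
    [DecidableEq n] [DecidableEq m]
    (A : Matrix n n ℝ) (B : Matrix n m ℝ) (K : Matrix m n (RatFunc ℝ))
    (Φx : Matrix n n (RatFunc ℝ)) (Sxu : Matrix n m (RatFunc ℝ))
    (Φu : Matrix m n (RatFunc ℝ)) (Suu : Matrix m m (RatFunc ℝ))
    (h : Matrix.fromBlocks (zz • (1 : Matrix n n (RatFunc ℝ)) - mR A) (-(mR B)) (-K) 1 *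
        Matrix.fromBlocks Φx Sxu Φu Suu = 1)
    (hA : IsUnit (zz • (1 : Matrix n n (RatFunc ℝ)) - mR A)) :
    let G := (zz • (1 : Matrix n n (RatFunc ℝ)) - mR A)⁻¹ * mR B
    Matrix.fromBlocks 1 (-G) (-K) 1 *
      Matrix.fromBlocks (Φx * (zz • (1 : Matrix n n (RatFunc ℝ)) - mR A)) Sxu
        (Φu * (zz • (1 : Matrix n n (RatFunc ℝ)) - mR A)) Suu = 1 := by
  intro G
  set D : Matrix n n (RatFunc ℝ) := zz • (1 : Matrix n n (RatFunc ℝ)) - mR A with hD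
  have hdet : IsUnit D.det := (Matrix.isUnit_iff_isUnit_det D).mp hA
  have hinv : D⁻¹ * D = 1 := Matrix.nonsing_inv_mul D hdet
  have h1 : Matrix.fromBlocks (1 : Matrix n n (RatFunc ℝ)) (-G) (-K) 1 =
      Matrix.fromBlocks D⁻¹ 0 0 1 * Matrix.fromBlocks D (-(mR B)) (-K) 1 := by
    rw [Matrix.fromBlocks_multiply]
    simp [hinv, G, Matrix.mul_neg, Matrix.mul_assoc]
    rfl
  have h2 : Matrix.fromBlocks (Φx * D) Sxu (Φu * D) Suu =
      Matrix.fromBlocks Φx Sxu Φu Suu * Matrix.fromBlocks D 0 0 1 := by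
    rw [Matrix.fromBlocks_multiply]
    simp
  rw [h1, h2, Matrix.mul_assoc, ← Matrix.mul_assoc (Matrix.fromBlocks D (-(mR B)) (-K) 1), h,
    Matrix.one_mul, Matrix.fromBlocks_multiply]
  simp [hinv]

end
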